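/- Monotonicity of moment ratios under likelihood-ratio ordering: let U, V be positive random variables with E[U^w], E[V^w] finite for all w in [0, W]. If the law of U stochastically dominates that of V in the likelihood-ratio order (densities p, q with p/q nondecreasing), then the map w ↦ E[U^w]/E[V^w] is nondecreasing on [0, W]. -/
import Mathlib


open MeasureTheory

/-- Core pointwise inequality, for `x ≤ y`. -/
lemma aux_core_pointwise (p q : ℝ → ℝ) {w1 w2 : ℝ} (h12 : w1 ≤ w2)
    {x y : ℝ} (hx : 0 < x) (hy : 0 < y) (hxy : x ≤ y)
    (hpq : p x * q y ≤ p y * q x) :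
    p x * x ^ w1 * (q y * y ^ w2) + p y * y ^ w1 * (q x * x ^ w2) ≤
      p x * x ^ w2 * (q y * y ^ w1) + p y * y ^ w2 * (q x * x ^ w1) := by
  have hw : w1 + (w2 - w1) = w2 := by ring
  have hxδ : x ^ w2 = x ^ w1 * x ^ (w2 - w1) := by
    rw [← Real.rpow_add hx, hw]
  have hyδ : y ^ w2 = y ^ w1 * y ^ (w2 - w1) := by
    rw [← Real.rpow_add hy, hw]
  have hmono : x ^ (w2 - w1) ≤ y ^ (w2 - w1) :=
    Real.rpow_le_rpow hx.le hxy (by linarith)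
  have hk : 0 ≤ (p y * q x - p x * q y) * (x ^ w1 * y ^ w1) *
      (y ^ (w2 - w1) - x ^ (w2 - w1)) :=
    mul_nonneg (mul_nonneg (by linarith)
      (mul_nonneg (Real.rpow_nonneg hx.le _) (Real.rpow_nonneg hy.le _)))
      (by linarith)
  rw [hxδ, hyδ]
  nlinarith [hk]

/-- Pointwise inequality for all real `x, y`. -/
lemma aux_pointwise (p q : ℝ → ℝ)
    (hsupp : ∀ x ∈ Set.Iic (0 : ℝ), p x = 0 ∧ q x = 0)
    (hlr : ∀ x y, x ≤ y → p x * q y ≤ p y * q x)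
    {w1 w2 : ℝ} (h12 : w1 ≤ w2) (x y : ℝ) :
    p x * x ^ w1 * (q y * y ^ w2) + p y * y ^ w1 * (q x * x ^ w2) ≤
      p x * x ^ w2 * (q y * y ^ w1) + p y * y ^ w2 * (q x * x ^ w1) := by
  by_cases hx : x ≤ 0
  · simp [(hsupp x hx).1, (hsupp x hx).2]
  by_cases hy : y ≤ 0
  · simp [(hsupp y hy).1, (hsupp y hy).2]
  push_neg at hx hy
  rcases le_total x y with h | h
  · exact aux_core_pointwise p q h12 hx hy h (hlr x y h)
  · have := aux_core_pointwise p q h12 hy hx h (hlr y x h)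
    linarith

/-- Monotonicity of moment ratios under likelihood-ratio ordering: if positive random
variables `U`, `V` have densities `p`, `q` (w.r.t. a common dominating measure on
`(0,∞)`) with `p/q` nondecreasing (stated via the cross-product condition), and all
moments `E[U^w]`, `E[V^w]` for `w ∈ [0, W]` are finite, then
`w ↦ E[U^w]/E[V^w]` is nondecreasing on `[0, W]`. -/
theorem moment_ratio_monotone
    {Ω₁ Ω₂ : Type} [MeasurableSpace Ω₁] [MeasurableSpace Ω₂]
    (P₁ : Measure Ω₁) (P₂ : Measure Ω₂)
    [IsProbabilityMeasure P₁] [IsProbabilityMeasure P₂]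
    (U : Ω₁ → ℝ) (V : Ω₂ → ℝ) (hU : Measurable U) (hV : Measurable V)
    (hUpos : ∀ ω, 0 < U ω) (hVpos : ∀ ω, 0 < V ω)
    (lam : Measure ℝ) (p q : ℝ → ℝ) (hp : Measurable p) (hq : Measurable q)
    (hp0 : ∀ x, 0 ≤ p x) (hq0 : ∀ x, 0 ≤ q x)
    (hsupp : ∀ x ∈ Set.Iic (0 : ℝ), p x = 0 ∧ q x = 0)
    (hUlaw : P₁.map U = lam.withDensity fun x => ENNReal.ofReal (p x))
    (hVlaw : P₂.map V = lam.withDensity fun x => ENNReal.ofReal (q x))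
    (hlr : ∀ x y, x ≤ y → p x * q y ≤ p y * q x)
    (W : ℝ)
    (hint : ∀ w ∈ Set.Icc (0 : ℝ) W,
      Integrable (fun ω => U ω ^ w) P₁ ∧ Integrable (fun ω => V ω ^ w) P₂) :
    MonotoneOn (fun w => (∫ ω, U ω ^ w ∂P₁) / ∫ ω, V ω ^ w ∂P₂) (Set.Icc 0 W) := by
  -- the densities times powers, as `ℝ≥0∞`-valued functions
  set cp : ℝ → ℝ → ENNReal := fun w x => ENNReal.ofReal (p x * x ^ w) with hcp
  set cq : ℝ → ℝ → ENNReal := fun w x => ENNReal.ofReal (q x * x ^ w) with hcq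
  have hrpow_meas : ∀ w : ℝ, Measurable fun x : ℝ => x ^ w := by
    intro w; measurability
  have hcpm : ∀ w, Measurable (cp w) := fun w =>
    ((hp.mul (hrpow_meas w)).ennreal_ofReal)
  have hcqm : ∀ w, Measurable (cq w) := fun w =>
    ((hq.mul (hrpow_meas w)).ennreal_ofReal)
  set A : ℝ → ENNReal := fun w => ∫⁻ x, cp w x ∂lam with hA
  set B : ℝ → ENNReal := fun w => ∫⁻ x, cq w x ∂lam with hB
  -- lintegral of the moment equals A/B
  have hAint : ∀ w, (∫⁻ ω, ENNReal.ofReal (U ω ^ w) ∂P₁) = A w := by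
    intro w
    have h1 : (∫⁻ ω, ENNReal.ofReal (U ω ^ w) ∂P₁)
        = ∫⁻ x, ENNReal.ofReal (x ^ w) ∂(P₁.map U) :=
      (lintegral_map ((hrpow_meas w).ennreal_ofReal) hU).symm
    rw [h1, hUlaw, lintegral_withDensity_eq_lintegral_mul _ (hp.ennreal_ofReal)
      ((hrpow_meas w).ennreal_ofReal)]
    refine lintegral_congr fun x => ?_
    simp only [Pi.mul_apply, hcp]
    rw [ENNReal.ofReal_mul (hp0 x)]
  have hBint : ∀ w, (∫⁻ ω, ENNReal.ofReal (V ω ^ w) ∂P₂) = B w := by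
    intro w
    have h1 : (∫⁻ ω, ENNReal.ofReal (V ω ^ w) ∂P₂)
        = ∫⁻ x, ENNReal.ofReal (x ^ w) ∂(P₂.map V) :=
      (lintegral_map ((hrpow_meas w).ennreal_ofReal) hV).symm
    rw [h1, hVlaw, lintegral_withDensity_eq_lintegral_mul _ (hq.ennreal_ofReal)
      ((hrpow_meas w).ennreal_ofReal)]
    refine lintegral_congr fun x => ?_
    simp only [Pi.mul_apply, hcq]
    rw [ENNReal.ofReal_mul (hq0 x)]
  -- moments as toReal of A/B
  have hAmom : ∀ w ∈ Set.Icc (0 : ℝ) W, (∫ ω, U ω ^ w ∂P₁) = (A w).toReal := by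
    intro w hw
    rw [integral_eq_lintegral_of_nonneg_ae
      (Filter.Eventually.of_forall fun ω => Real.rpow_nonneg (hUpos ω).le w)
      (Measurable.aestronglyMeasurable (by measurability)), hAint]
  have hBmom : ∀ w ∈ Set.Icc (0 : ℝ) W, (∫ ω, V ω ^ w ∂P₂) = (B w).toReal := by
    intro w hw
    rw [integral_eq_lintegral_of_nonneg_ae
      (Filter.Eventually.of_forall fun ω => Real.rpow_nonneg (hVpos ω).le w)
      (Measurable.aestronglyMeasurable (by measurability)), hBint]
  -- finiteness
  have hAfin : ∀ w ∈ Set.Icc (0 : ℝ) W, A w ≠ ⊤ := by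
    intro w hw
    rw [← hAint]
    exact ((hasFiniteIntegral_iff_ofReal
      (Filter.Eventually.of_forall fun ω => Real.rpow_nonneg (hUpos ω).le w)).mp
      (hint w hw).1.hasFiniteIntegral).ne
  have hBfin : ∀ w ∈ Set.Icc (0 : ℝ) W, B w ≠ ⊤ := by
    intro w hw
    rw [← hBint]
    exact ((hasFiniteIntegral_iff_ofReal
      (Filter.Eventually.of_forall fun ω => Real.rpow_nonneg (hVpos ω).le w)).mp
      (hint w hw).2.hasFiniteIntegral).ne
  -- positivity of denominators
  have hBpos : ∀ w ∈ Set.Icc (0 : ℝ) W, 0 < ∫ ω, V ω ^ w ∂P₂ := by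
    intro w hw
    rw [integral_pos_iff_support_of_nonneg
      (fun ω => Real.rpow_nonneg (hVpos ω).le w) (hint w hw).2]
    have : Function.support (fun ω => V ω ^ w) = Set.univ :=
      Set.eq_univ_of_forall fun ω => (Real.rpow_pos_of_pos (hVpos ω) w).ne'
    rw [this, measure_univ]
    exact zero_lt_one
  -- key cross inequality
  have key : ∀ w1 w2, w1 ≤ w2 → A w1 * B w2 ≤ A w2 * B w1 := by
    intro w1 w2 h12
    have split : ∀ (f g : ℝ → ENNReal), Measurable f → Measurable g →
        (∫⁻ x, ∫⁻ y, (f x * g y + f y * g x) ∂lam ∂lam)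
          = (∫⁻ x, f x ∂lam) * (∫⁻ y, g y ∂lam)
            + (∫⁻ x, f x ∂lam) * (∫⁻ y, g y ∂lam) := by
      intro f g hf hg
      have inner : ∀ x, (∫⁻ y, (f x * g y + f y * g x) ∂lam)
          = f x * (∫⁻ y, g y ∂lam) + (∫⁻ y, f y ∂lam) * g x := by
        intro x
        rw [lintegral_add_left (hg.const_mul _)]
        rw [lintegral_const_mul _ hg, lintegral_mul_const _ hf]
      simp only [inner]
      rw [lintegral_add_left (hf.mul_const _)]
      rw [lintegral_mul_const _ hf, lintegral_const_mul _ hg]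
    have pw : ∀ x y : ℝ,
        cp w1 x * cq w2 y + cp w1 y * cq w2 x ≤
          cp w2 x * cq w1 y + cp w2 y * cq w1 x := by
      intro x y
      have hnnp : ∀ (z w : ℝ), 0 ≤ p z * z ^ w := by
        intro z w
        by_cases hz : z ≤ 0
        · simp [(hsupp z hz).1]
        · exact mul_nonneg (hp0 z) (Real.rpow_nonneg (le_of_not_ge hz) w)
      have hnnq : ∀ (z w : ℝ), 0 ≤ q z * z ^ w := by
        intro z w
        by_cases hz : z ≤ 0
        · simp [(hsupp z hz).2]
        · exact mul_nonneg (hq0 z) (Real.rpow_nonneg (le_of_not_ge hz) w)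
      simp only [hcp, hcq]
      rw [← ENNReal.ofReal_mul (hnnp x w1), ← ENNReal.ofReal_mul (hnnp y w1),
        ← ENNReal.ofReal_mul (hnnp x w2), ← ENNReal.ofReal_mul (hnnp y w2),
        ← ENNReal.ofReal_add (mul_nonneg (hnnp x w1) (hnnq y w2))
          (mul_nonneg (hnnp y w1) (hnnq x w2)),
        ← ENNReal.ofReal_add (mul_nonneg (hnnp x w2) (hnnq y w1))
          (mul_nonneg (hnnp y w2) (hnnq x w1))]
      exact ENNReal.ofReal_le_ofReal (aux_pointwise p q hsupp hlr h12 x y)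
    have step : A w1 * B w2 + A w1 * B w2 ≤ A w2 * B w1 + A w2 * B w1 := by
      calc A w1 * B w2 + A w1 * B w2
          = ∫⁻ x, ∫⁻ y, (cp w1 x * cq w2 y + cp w1 y * cq w2 x) ∂lam ∂lam :=
            (split (cp w1) (cq w2) (hcpm w1) (hcqm w2)).symm
        _ ≤ ∫⁻ x, ∫⁻ y, (cp w2 x * cq w1 y + cp w2 y * cq w1 x) ∂lam ∂lam :=
            lintegral_mono fun x => lintegral_mono fun y => pw x y
        _ = A w2 * B w1 + A w2 * B w1 := split (cp w2) (cq w1) (hcpm w2) (hcqm w1)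
    have h2 : (2 : ENNReal) * (A w1 * B w2) ≤ 2 * (A w2 * B w1) := by
      rw [two_mul, two_mul]; exact step
    exact (ENNReal.mul_le_mul_iff_right two_ne_zero ENNReal.ofNat_ne_top).mp h2
  -- conclude
  intro w1 hw1 w2 hw2 h12
  simp only
  rw [div_le_div_iff₀ (hBpos w1 hw1) (hBpos w2 hw2)]
  rw [hAmom w1 hw1, hAmom w2 hw2, hBmom w1 hw1, hBmom w2 hw2,
    ← ENNReal.toReal_mul, ← ENNReal.toReal_mul]
  exact (ENNReal.toReal_le_toReal
    (ENNReal.mul_ne_top (hAfin w1 hw1) (hBfin w2 hw2))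
    (ENNReal.mul_ne_top (hAfin w2 hw2) (hBfin w1 hw1))).mpr (key w1 w2 h12)
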